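/- If E is an (n+1)-dimensional ECP-space on ([a,b];T), then for any c,d ∈ [a,b] with c < d, E possesses a positive Bernstein-like basis relative to (c,d). -/

import Mathlib

open Set

/-- A knot sequence `a = t 0 < t 1 < ⋯ < t (q+1) = b`. -/
structure Knots (q : ℕ) where
  t : Fin (q + 2) → ℝ
  strictMono : StrictMono t

/-- Piecewise functions on `([a,b]; T)`: one section per interval. -/
abbrev PF (q : ℕ) := Fin (q + 1) → ℝ → ℝ

namespace PW

variable {q : ℕ}

/-- The `k`-th section interval `[t_k, t_{k+1}]`. -/
def Ik (T : Knots q) (k : Fin (q + 1)) : Set ℝ :=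
  Set.Icc (T.t k.castSucc) (T.t k.succ)

/-- One-sided `j`-th derivative of the `k`-th section of `F` at `x`
(derivatives taken within the section interval). -/
noncomputable def der (T : Knots q) (F : PF q) (k : Fin (q + 1)) (j : ℕ) (x : ℝ) : ℝ :=
  iteratedDerivWithin j (F k) (Ik T k) x

/-- Lower triangular with positive diagonal entries. -/
def GoodMatrix {n : ℕ} (M : Matrix (Fin (n + 1)) (Fin (n + 1)) ℝ) : Prop :=
  (∀ i j, i < j → M i j = 0) ∧ (∀ i, 0 < M i i)

/-- The connection conditions at the interior knots: the vector of right derivatives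
at `t_{m+1}` equals `M m` times the vector of left derivatives. -/
def Connect (n : ℕ) (T : Knots q)
    (M : Fin q → Matrix (Fin (n + 1)) (Fin (n + 1)) ℝ) (F : PF q) : Prop :=
  ∀ m : Fin q, ∀ i : Fin (n + 1),
    der T F m.succ (i : ℕ) (T.t m.succ.castSucc)
      = ∑ j : Fin (n + 1), M m i j * der T F m.castSucc (j : ℕ) (T.t m.succ.castSucc)

/-- An `(n+1)`-dimensional PW-space on `([a,b]; T)`: an `(n+1)`-dimensional space of
piecewise functions, satisfying connection conditions given by lower triangular matrices
with positive diagonals, whose section-spaces are `(n+1)`-dimensional W-spaces. -/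
structure PWSpace (n q : ℕ) (T : Knots q) where
  M : Fin q → Matrix (Fin (n + 1)) (Fin (n + 1)) ℝ
  goodM : ∀ m, GoodMatrix (M m)
  E : Submodule ℝ (PF q)
  dim : Module.finrank ℝ E = n + 1
  smooth : ∀ F ∈ E, ∀ k, ContDiffOn ℝ n (F k) (Ik T k)
  connect : ∀ F ∈ E, Connect n T M F
  wspace : ∀ k, ∃ g : Fin (n + 1) → ℝ → ℝ,
    (∀ i, ∃ F ∈ E, ∀ x ∈ Ik T k, F k x = g i x) ∧
    (∀ F ∈ E, ∃ c : Fin (n + 1) → ℝ, ∀ x ∈ Ik T k, F k x = ∑ i, c i * g i x) ∧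
    (∀ x ∈ Ik T k,
      (Matrix.of fun i j : Fin (n + 1) =>
        iteratedDerivWithin (j : ℕ) (g i) (Ik T k) x).det ≠ 0)

/-- The left endpoint `a`. -/
def lo (T : Knots q) : ℝ := T.t 0

/-- The right endpoint `b`. -/
def hi (T : Knots q) : ℝ := T.t (Fin.last (q + 1))

/-- The section index attached to a point of `[a,b]` (right side at `a` and at the
interior knots, left side at `b`). -/
noncomputable def sec (T : Knots q) (x : ℝ) : Fin (q + 1) :=
  if h : ∃ k : Fin (q + 1), T.t k.castSucc ≤ x ∧ x < T.t k.succ then h.choose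
  else Fin.last q

/-- Multiplicity of `x` as a zero of `F`: the largest `p ≤ n+1` such that all one-sided
derivatives of order `< p` vanish at `x`. -/
noncomputable def mult (n : ℕ) (T : Knots q) (F : PF q) (x : ℝ) : ℕ :=
  sSup {p | p ≤ n + 1 ∧ ∀ j < p, der T F (sec T x) j x = 0}

/-- The value of a piecewise function at a point. -/
noncomputable def pval (T : Knots q) (F : PF q) (x : ℝ) : ℝ :=
  F (sec T x) x

/-- `F` vanishes identically (on the section intervals). -/
def NullPF (T : Knots q) (F : PF q) : Prop :=
  ∀ k, ∀ x ∈ Ik T k, F k x = 0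

/-- `P` is an ECP-space: every nonzero element has at most `n` zeros in `[a,b]`,
counted with multiplicities up to `n+1`. -/
def IsECP {n : ℕ} {T : Knots q} (P : PWSpace n q T) : Prop :=
  ∀ F ∈ P.E, ¬ NullPF T F →
    ∀ S : Finset ℝ, (↑S : Set ℝ) ⊆ Set.Icc (lo T) (hi T) →
      ∑ x ∈ S, mult n T F x ≤ n

/-- Multiplicity of `x` as a zero of a function `g` of the `k`-th section. -/
noncomputable def multSec (n : ℕ) (T : Knots q) (k : Fin (q + 1)) (g : ℝ → ℝ) (x : ℝ) : ℕ :=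
  sSup {p | p ≤ n + 1 ∧ ∀ j < p, iteratedDerivWithin j g (Ik T k) x = 0}

/-- `P` is a PEC-space: each section-space is an EC-space on its own interval, i.e.
every element not identically zero on `[t_k,t_{k+1}]` has at most `n` zeros there,
counted with multiplicities up to `n+1`. -/
def IsPEC {n : ℕ} {T : Knots q} (P : PWSpace n q T) : Prop :=
  ∀ k, ∀ F ∈ P.E, ¬ (∀ x ∈ Ik T k, F k x = 0) →
    ∀ S : Finset ℝ, (↑S : Set ℝ) ⊆ Ik T k →
      ∑ x ∈ S, multSec n T k (F k) x ≤ n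

/-- `(B 0, …, B n)` is a Bernstein-like basis of `P` relative to `(c,d)`:
a basis such that `B i` vanishes exactly `i` times at `c` and `n - i` times at `d`. -/
def IsBLB {n : ℕ} {T : Knots q} (P : PWSpace n q T) (c d : ℝ)
    (B : Fin (n + 1) → PF q) : Prop :=
  (∀ i, B i ∈ P.E) ∧ LinearIndependent ℝ B ∧
    ∀ i : Fin (n + 1), mult n T (B i) c = (i : ℕ) ∧ mult n T (B i) d = n - (i : ℕ)

/-- Positivity of all one-sided values on the open interval `(c,d)`. -/
def PosOn {n : ℕ} (T : Knots q) (c d : ℝ) (B : Fin (n + 1) → PF q) : Prop :=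
  ∀ i, ∀ k, ∀ x ∈ Ik T k, c < x → x < d → 0 < B i k x

/-- Normalised: the functions sum to `1`. -/
def Normalised {n : ℕ} (T : Knots q) (B : Fin (n + 1) → PF q) : Prop :=
  ∀ k, ∀ x ∈ Ik T k, ∑ i, B i k x = 1

/-- Equality of piecewise functions on the section intervals. -/
def EqSec (T : Knots q) (F G : PF q) : Prop :=
  ∀ k, ∀ x ∈ Ik T k, F k x = G k x

/-- `P` contains the constant function `1`. -/
def ContainsOne {n : ℕ} {T : Knots q} (P : PWSpace n q T) : Prop :=
  ∃ F ∈ P.E, ∀ k, ∀ x ∈ Ik T k, F k x = 1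

/-- Sectionwise derivative of a piecewise function. -/
noncomputable def pderiv (T : Knots q) (F : PF q) : PF q :=
  fun k x => derivWithin (F k) (Ik T k) x

/-- `D` is the derived space `DE` of `P`: its connection matrices are obtained by
deleting the first row and column of those of `P`, and its elements are (up to values
on the section intervals) the sectionwise derivatives of the elements of `P`. -/
def IsDeriv {m : ℕ} {T : Knots q} (P : PWSpace (m + 1) q T) (D : PWSpace m q T) : Prop :=
  (∀ j : Fin q, D.M j = (P.M j).submatrix Fin.succ Fin.succ) ∧
  (∀ G ∈ D.E, ∃ F ∈ P.E, EqSec T G (pderiv T F)) ∧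
  (∀ F ∈ P.E, ∃ G ∈ D.E, EqSec T G (pderiv T F))

/-- The piecewise generalised derivatives `L_i` associated with a system `w` of
piecewise weight functions, computed on the `k`-th section. -/
noncomputable def Lop (T : Knots q) (w : ℕ → PF q) (k : Fin (q + 1)) :
    ℕ → (ℝ → ℝ) → ℝ → ℝ
  | 0, f, x => f x / w 0 k x
  | (i + 1), f, x => derivWithin (Lop T w k i f) (Ik T k) x / w (i + 1) k x

/-- `(w 0, …, w n)` is a system of piecewise weight functions on `([a,b]; T)`:
`w i` is positive and `(n-i)` times continuously differentiable on each section. -/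
def WeightSystem (n : ℕ) (T : Knots q) (w : ℕ → PF q) : Prop :=
  ∀ i ≤ n, ∀ k, (∀ x ∈ Ik T k, 0 < w i k x) ∧ ContDiffOn ℝ (n - i) (w i k) (Ik T k)

/-- Membership in `ECP(w 0, …, w n)`: `F` is `n` times continuously differentiable on
each section, `L_n F` is constant on `[a,b]`, and `L_i F` is continuous across the
interior knots for `i < n`. -/
def ECPcond (n : ℕ) (T : Knots q) (w : ℕ → PF q) (F : PF q) : Prop :=
  (∀ k, ContDiffOn ℝ n (F k) (Ik T k)) ∧
  (∃ c : ℝ, ∀ k, ∀ x ∈ Ik T k, Lop T w k n (F k) x = c) ∧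
  (∀ i < n, ∀ m : Fin q,
    Lop T w m.succ i (F m.succ) (T.t m.succ.castSucc)
      = Lop T w m.castSucc i (F m.castSucc) (T.t m.succ.castSucc))


section Aux
variable {q : ℕ}

lemma knot_lt (T : Knots q) (k : Fin (q + 1)) : T.t k.castSucc < T.t k.succ :=
  T.strictMono (Fin.castSucc_lt_succ (i := k))

lemma uD (T : Knots q) (k : Fin (q + 1)) : UniqueDiffOn ℝ (Ik T k) :=
  uniqueDiffOn_Icc (knot_lt T k)

lemma left_mem_Ik (T : Knots q) (k : Fin (q + 1)) : T.t k.castSucc ∈ Ik T k :=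
  ⟨le_refl _, (knot_lt T k).le⟩

lemma right_mem_Ik (T : Knots q) (k : Fin (q + 1)) : T.t k.succ ∈ Ik T k :=
  ⟨(knot_lt T k).le, le_refl _⟩

lemma Ik_subset (T : Knots q) (k : Fin (q + 1)) : Ik T k ⊆ Set.Icc (lo T) (hi T) :=
  Set.Icc_subset_Icc (T.strictMono.monotone (Fin.zero_le _))
    (T.strictMono.monotone (Fin.le_last _))

lemma iteratedDerivWithin_zero_fun' {s : Set ℝ} (hUD : UniqueDiffOn ℝ s) {x : ℝ} (hx : x ∈ s)
    {j : ℕ} : iteratedDerivWithin j (fun _ => (0 : ℝ)) s x = 0 := by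
  simp [iteratedDerivWithin, iteratedFDerivWithin_zero_fun]

lemma iteratedDerivWithin_sum_mul {s : Set ℝ} (hUD : UniqueDiffOn ℝ s) {x : ℝ} (hx : x ∈ s)
    {n : ℕ} {ι : Type*} (u : Finset ι) (f : ι → ℝ → ℝ) (a : ι → ℝ)
    (hf : ∀ i ∈ u, ContDiffOn ℝ n (f i) s) {j : ℕ} (hj : j ≤ n) :
    iteratedDerivWithin j (fun y => ∑ i ∈ u, a i * f i y) s x
      = ∑ i ∈ u, a i * iteratedDerivWithin j (f i) s x := by
  classical
  induction u using Finset.cons_induction with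
  | empty => simp [iteratedDerivWithin_zero_fun' hUD hx]
  | cons b u hni ih =>
    have hjn : (j : WithTop ℕ∞) ≤ (n : WithTop ℕ∞) := by exact_mod_cast hj
    have hfb : ContDiffOn ℝ j (f b) s := (hf b (Finset.mem_cons_self b u)).of_le hjn
    have hfu : ∀ i ∈ u, ContDiffOn ℝ n (f i) s := fun i hi => hf i (Finset.mem_cons_of_mem hi)
    have hsum : ContDiffOn ℝ j (fun y => ∑ i ∈ u, a i * f i y) s := by
      apply ContDiffOn.sum
      intro i hi
      exact ((hfu i hi).of_le hjn).const_smul (a i)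
    have h1 : ContDiffOn ℝ j (fun y => a b * f b y) s := hfb.const_smul (a b)
    simp only [Finset.sum_cons]
    have hadd := iteratedDerivWithin_add hx hUD (h1.contDiffWithinAt hx) (hsum.contDiffWithinAt hx)
    have : (fun y => a b * f b y + ∑ i ∈ u, a i * f i y)
        = ((fun y => a b * f b y) + fun y => ∑ i ∈ u, a i * f i y) := rfl
    rw [this, hadd, iteratedDerivWithin_const_mul hx hUD (a b) (hfb.contDiffWithinAt hx), ih hfu]

end Aux
section Aux2
variable {q : ℕ}

lemma cover_unique {T : Knots q} {x : ℝ} {k k' : Fin (q + 1)}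
    (h : T.t k.castSucc ≤ x ∧ x < T.t k.succ) (h' : T.t k'.castSucc ≤ x ∧ x < T.t k'.succ) :
    k = k' := by
  by_contra hne
  rcases lt_or_gt_of_ne hne with hlt | hlt
  · have : T.t k.succ ≤ T.t k'.castSucc := T.strictMono.monotone (by
      simp only [Fin.le_def, Fin.lt_def, Fin.val_succ, Fin.coe_castSucc] at *
      omega)
    linarith [h.2, h'.1]
  · have : T.t k'.succ ≤ T.t k.castSucc := T.strictMono.monotone (by
      simp only [Fin.le_def, Fin.lt_def, Fin.val_succ, Fin.coe_castSucc] at *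
      omega)
    linarith [h'.2, h.1]

lemma exists_cover {T : Knots q} {x : ℝ} (h1 : lo T ≤ x) (h2 : x < hi T) :
    ∃ k : Fin (q + 1), T.t k.castSucc ≤ x ∧ x < T.t k.succ := by
  classical
  set S : Finset (Fin (q + 2)) := Finset.univ.filter (fun j => x < T.t j) with hS
  have hSne : S.Nonempty := ⟨Fin.last (q + 1), by simp [hS]; exact h2⟩
  set j₀ := S.min' hSne with hj
  have hj₀ : x < T.t j₀ := by
    have := S.min'_mem hSne
    simp only [hS, Finset.mem_filter] at this
    exact this.2
  have hj0 : j₀ ≠ 0 := by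
    intro h0
    rw [h0] at hj₀
    exact absurd hj₀ (not_lt.mpr h1)
  refine ⟨j₀.pred hj0, ?_, ?_⟩
  · by_contra hlt
    push_neg at hlt
    have hmem : (j₀.pred hj0).castSucc ∈ S := by
      simp only [hS, Finset.mem_filter]
      exact ⟨Finset.mem_univ _, hlt⟩
    have hle := S.min'_le _ hmem
    rw [← hj] at hle
    have : (j₀.pred hj0).castSucc < j₀ := by
      conv_rhs => rw [← Fin.succ_pred j₀ hj0]
      exact Fin.castSucc_lt_succ
    exact absurd hle (not_le.mpr this)
  · rw [Fin.succ_pred]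
    exact hj₀

lemma sec_eq {T : Knots q} {x : ℝ} {k : Fin (q + 1)}
    (h : T.t k.castSucc ≤ x ∧ x < T.t k.succ) : sec T x = k := by
  have hex : ∃ k : Fin (q + 1), T.t k.castSucc ≤ x ∧ x < T.t k.succ := ⟨k, h⟩
  rw [sec, dif_pos hex]
  exact cover_unique hex.choose_spec h

lemma sec_mem {T : Knots q} {x : ℝ} (h1 : lo T ≤ x) (h2 : x ≤ hi T) :
    x ∈ Ik T (sec T x) := by
  rcases lt_or_eq_of_le h2 with hlt | heq
  · obtain ⟨k, hk⟩ := exists_cover h1 hlt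
    rw [sec_eq hk]
    exact ⟨hk.1, hk.2.le⟩
  · have hnex : ¬ ∃ k : Fin (q + 1), T.t k.castSucc ≤ x ∧ x < T.t k.succ := by
      rintro ⟨k, -, hk2⟩
      have hle : T.t k.succ ≤ T.t (Fin.last (q + 1)) := T.strictMono.monotone (Fin.le_last _)
      simp only [hi] at heq
      rw [heq] at hk2
      exact absurd (hk2.trans_le hle) (lt_irrefl _)
    rw [sec, dif_neg hnex]
    simp only [hi] at heq
    constructor
    · rw [heq]
      exact T.strictMono.monotone (Fin.le_last _)
    · rw [heq, Fin.succ_last]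

lemma mult_mem {n : ℕ} (T : Knots q) (F : PF q) (x : ℝ) :
    mult n T F x ≤ n + 1 ∧ ∀ j < mult n T F x, der T F (sec T x) j x = 0 := by
  have h := Nat.sSup_mem (s := {p : ℕ | p ≤ n + 1 ∧ ∀ j < p, der T F (sec T x) j x = 0})
    ⟨0, Nat.zero_le _, fun j hj => absurd hj (Nat.not_lt_zero j)⟩
    ⟨n + 1, fun p hp => hp.1⟩
  exact h

lemma le_mult {n : ℕ} {T : Knots q} {F : PF q} {x : ℝ} {p : ℕ} (hp : p ≤ n + 1)
    (h : ∀ j < p, der T F (sec T x) j x = 0) : p ≤ mult n T F x :=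
  le_csSup (⟨n + 1, fun r hr => hr.1⟩ : BddAbove {p : ℕ | p ≤ n + 1 ∧ ∀ j < p, der T F (sec T x) j x = 0})
    (⟨hp, h⟩ : p ∈ {p : ℕ | p ≤ n + 1 ∧ ∀ j < p, der T F (sec T x) j x = 0})

lemma der_zero_apply {T : Knots q} (F : PF q) (k : Fin (q + 1)) (x : ℝ) :
    der T F k 0 x = F k x := by
  simp [der, iteratedDerivWithin_zero]

end Aux2
section Aux3
variable {q : ℕ}

set_option synthInstance.maxHeartbeats 1000000 in
lemma eq_zero_of_section_zero {n : ℕ} {T : Knots q} (P : PWSpace n q T)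
    (k : Fin (q + 1)) {F : PF q} (hF : F ∈ P.E) (h0 : ∀ x ∈ Ik T k, F k x = 0) :
    F = 0 := by
  classical
  obtain ⟨g, hg1, hg2, hg3⟩ := P.wspace k
  have hgs : ∀ i, ContDiffOn ℝ n (g i) (Ik T k) := by
    intro i
    obtain ⟨G, hG, hGg⟩ := hg1 i
    exact (P.smooth G hG k).congr fun x hx => (hGg x hx).symm
  set gt : Fin (n + 1) → ℝ → ℝ := fun i x => if x ∈ Ik T k then g i x else 0 with hgt
  have hli : LinearIndependent ℝ gt := by
    rw [Fintype.linearIndependent_iff]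
    intro a ha i
    have hax : ∀ x ∈ Ik T k, ∑ i', a i' * g i' x = 0 := by
      intro x hx
      have h := congrFun ha x
      simpa [gt, hx, Finset.sum_apply, smul_eq_mul] using h
    set x₀ := T.t k.castSucc with hx₀def
    have hx₀ : x₀ ∈ Ik T k := left_mem_Ik T k
    have hvm : ∀ j : Fin (n + 1),
        ∑ i', a i' * iteratedDerivWithin (j : ℕ) (g i') (Ik T k) x₀ = 0 := by
      intro j
      rw [← iteratedDerivWithin_sum_mul (uD T k) hx₀ Finset.univ g a (fun i' _ => hgs i')
        (Nat.lt_succ_iff.mp j.isLt)]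
      have hEq : Set.EqOn (fun y => ∑ i', a i' * g i' y) (fun _ => (0 : ℝ)) (Ik T k) :=
        fun x hx => hax x hx
      rw [iteratedDerivWithin_congr hEq hx₀]
      exact iteratedDerivWithin_zero_fun' (uD T k) hx₀
    have hdet := hg3 x₀ hx₀
    have hv : Matrix.vecMul a (Matrix.of fun i' j : Fin (n + 1) =>
        iteratedDerivWithin (j : ℕ) (g i') (Ik T k) x₀) = 0 := by
      funext j
      simpa [Matrix.vecMul, dotProduct] using hvm j
    have := Matrix.eq_zero_of_vecMul_eq_zero hdet hv
    exact congrFun this i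
  let ρ : PF q →ₗ[ℝ] (ℝ → ℝ) :=
    { toFun := fun G x => if x ∈ Ik T k then G k x else 0
      map_add' := by intro G H; funext x; by_cases hx : x ∈ Ik T k <;> simp [hx]
      map_smul' := by intro c G; funext x; by_cases hx : x ∈ Ik T k <;> simp [hx] }
  let ρ' : P.E →ₗ[ℝ] (ℝ → ℝ) := ρ.comp P.E.subtype
  have hfd : FiniteDimensional ℝ P.E :=
    Module.finite_of_finrank_pos (by rw [P.dim]; omega)
  have hrange : LinearMap.range ρ' = Submodule.span ℝ (Set.range gt) := by
    apply le_antisymm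
    · rintro _ ⟨⟨G, hG⟩, rfl⟩
      obtain ⟨aG, haG⟩ := hg2 G hG
      have hexp : ρ' ⟨G, hG⟩ = ∑ i, aG i • gt i := by
        funext x
        by_cases hx : x ∈ Ik T k
        · simp [ρ', ρ, hx, gt, haG x hx, Finset.sum_apply]
        · simp [ρ', ρ, hx, gt, Finset.sum_apply]
      rw [hexp]
      exact Submodule.sum_mem _ fun i _ =>
        Submodule.smul_mem _ _ (Submodule.subset_span ⟨i, rfl⟩)
    · rw [Submodule.span_le]
      rintro _ ⟨i, rfl⟩
      obtain ⟨G, hG, hGg⟩ := hg1 i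
      refine ⟨⟨G, hG⟩, ?_⟩
      funext x
      by_cases hx : x ∈ Ik T k <;> simp [ρ', ρ, gt, hx, hGg x]
  have hrk : Module.finrank ℝ (LinearMap.range ρ') = n + 1 := by
    rw [hrange, finrank_span_eq_card hli, Fintype.card_fin]
  have hker : LinearMap.ker ρ' = ⊥ := by
    have h1 := LinearMap.finrank_range_add_finrank_ker ρ'
    rw [P.dim, hrk] at h1
    have h2 : Module.finrank ℝ (LinearMap.ker ρ') = 0 := by omega
    exact Submodule.finrank_eq_zero.mp h2
  have hmem : (⟨F, hF⟩ : P.E) ∈ LinearMap.ker ρ' := by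
    rw [LinearMap.mem_ker]
    funext x
    by_cases hx : x ∈ Ik T k <;> simp [ρ', ρ, hx]
    exact h0 x hx
  rw [hker, Submodule.mem_bot] at hmem
  exact congrArg Subtype.val hmem

end Aux3
section Aux4
variable {q : ℕ}

lemma der_add' {n : ℕ} {T : Knots q} (P : PWSpace n q T) {F G : PF q}
    (hF : F ∈ P.E) (hG : G ∈ P.E) (k : Fin (q + 1)) {x : ℝ} (hx : x ∈ Ik T k)
    {j : ℕ} (hj : j ≤ n) :
    der T (F + G) k j x = der T F k j x + der T G k j x := by
  have hjc : ((j : ℕ) : WithTop ℕ∞) ≤ (n : WithTop ℕ∞) := by exact_mod_cast hj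
  have hf := (P.smooth F hF k).of_le hjc
  have hg := (P.smooth G hG k).of_le hjc
  simpa [der] using iteratedDerivWithin_add hx (uD T k) (hf.contDiffWithinAt hx) (hg.contDiffWithinAt hx)

lemma der_smul' {n : ℕ} {T : Knots q} (P : PWSpace n q T) {F : PF q}
    (hF : F ∈ P.E) (k : Fin (q + 1)) {x : ℝ} (hx : x ∈ Ik T k)
    {j : ℕ} (hj : j ≤ n) (e : ℝ) :
    der T (e • F) k j x = e * der T F k j x := by
  have hjc : ((j : ℕ) : WithTop ℕ∞) ≤ (n : WithTop ℕ∞) := by exact_mod_cast hj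
  have hf := (P.smooth F hF k).of_le hjc
  simpa [der, smul_eq_mul] using iteratedDerivWithin_const_smul hx (uD T k) e (hf.contDiffWithinAt hx)

lemma val_knot {n : ℕ} {T : Knots q} (P : PWSpace n q T) {F : PF q} (hF : F ∈ P.E)
    (m : Fin q) :
    F m.succ (T.t m.succ.castSucc) = P.M m 0 0 * F m.castSucc (T.t m.succ.castSucc) := by
  have h := P.connect F hF m 0
  rw [Finset.sum_eq_single (0 : Fin (n + 1))] at h
  · simpa [der, Fin.val_zero, iteratedDerivWithin_zero] using h
  · intro b _ hb
    have hM : P.M m 0 b = 0 := (P.goodM m).1 0 b (Fin.pos_iff_ne_zero.mpr hb)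
    rw [hM]; ring
  · intro hni; exact absurd (Finset.mem_univ _) hni

lemma mult_smul {n : ℕ} {T : Knots q} (P : PWSpace n q T) {F : PF q} (hF : F ∈ P.E)
    {e : ℝ} (he : e ≠ 0) {x : ℝ} (hx : x ∈ Ik T (sec T x)) :
    mult n T (e • F) x = mult n T F x := by
  have key : ∀ j ≤ n, der T (e • F) (sec T x) j x = e * der T F (sec T x) j x :=
    fun j hj => der_smul' P hF _ hx hj e
  unfold mult
  congr 1
  ext p
  simp only [Set.mem_setOf_eq]
  constructor
  · rintro ⟨hp, hz⟩
    refine ⟨hp, fun j hj => ?_⟩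
    have h := hz j hj
    rw [key j (by omega)] at h
    exact (mul_eq_zero.mp h).resolve_left he
  · rintro ⟨hp, hz⟩
    refine ⟨hp, fun j hj => ?_⟩
    rw [key j (by omega), hz j hj]; ring

end Aux4
section Aux5
variable {q : ℕ}

set_option maxHeartbeats 1000000 in
set_option synthInstance.maxHeartbeats 1000000 in
lemma exists_Bi {n : ℕ} {T : Knots q} (P : PWSpace n q T) (hP : IsECP P)
    {c d : ℝ} (hc : c ∈ Set.Icc (lo T) (hi T)) (hd : d ∈ Set.Icc (lo T) (hi T))
    (hcd : c < d) (i : Fin (n + 1)) :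
    ∃ B : PF q, B ∈ P.E ∧ mult n T B c = i ∧ mult n T B d = n - i ∧
      ∀ k, ∀ x ∈ Ik T k, c < x → x < d → 0 < B k x := by
  classical
  have hin : (i : ℕ) ≤ n := Nat.lt_succ_iff.mp i.isLt
  have hcI : c ∈ Ik T (sec T c) := sec_mem hc.1 hc.2
  have hdI : d ∈ Ik T (sec T d) := sec_mem hd.1 hd.2
  have hfd : FiniteDimensional ℝ P.E :=
    Module.finite_of_finrank_pos (by rw [P.dim]; omega)
  -- the interpolation functional
  let Φ : P.E →ₗ[ℝ] (Fin n → ℝ) :=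
    { toFun := fun F l =>
        if (l : ℕ) < (i : ℕ) then der T F.1 (sec T c) (l : ℕ) c
        else der T F.1 (sec T d) ((l : ℕ) - (i : ℕ)) d
      map_add' := by
        intro F G
        funext l
        have hco : ((F + G : P.E) : PF q) = (F : PF q) + (G : PF q) := rfl
        by_cases hl : (l : ℕ) < (i : ℕ)
        · simp only [hl, if_true, Pi.add_apply, hco]
          exact der_add' P F.2 G.2 _ hcI (by have := l.isLt; omega)
        · simp only [hl, if_false, Pi.add_apply, hco]
          exact der_add' P F.2 G.2 _ hdI (by have := l.isLt; omega)
      map_smul' := by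
        intro e F
        funext l
        have hco : ((e • F : P.E) : PF q) = e • (F : PF q) := rfl
        by_cases hl : (l : ℕ) < (i : ℕ)
        · simp only [hl, if_true, Pi.smul_apply, smul_eq_mul, RingHom.id_apply, hco]
          exact der_smul' P F.2 _ hcI (by have := l.isLt; omega) e
        · simp only [hl, if_false, Pi.smul_apply, smul_eq_mul, RingHom.id_apply, hco]
          exact der_smul' P F.2 _ hdI (by have := l.isLt; omega) e }
  have hker : LinearMap.ker Φ ≠ ⊥ := by
    intro hbot
    have h1 := LinearMap.finrank_range_add_finrank_ker Φ
    rw [P.dim, hbot, finrank_bot] at h1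
    have h2 : Module.finrank ℝ (LinearMap.range Φ) ≤ n := by
      have h3 := Submodule.finrank_le (LinearMap.range Φ)
      rwa [Module.finrank_fin_fun] at h3
    omega
  obtain ⟨Fi, hFiker, hFine⟩ := Submodule.exists_mem_ne_zero_of_ne_bot hker
  set F : PF q := (Fi : PF q) with hFdef
  have hFE : F ∈ P.E := Fi.2
  have hΦ : Φ Fi = 0 := hFiker
  have hvc : ∀ j < (i : ℕ), der T F (sec T c) j c = 0 := by
    intro j hj
    have h := congrFun hΦ ⟨j, by omega⟩
    simpa [Φ, hj] using h
  have hvd : ∀ j < n - (i : ℕ), der T F (sec T d) j d = 0 := by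
    intro j hj
    have h := congrFun hΦ ⟨(i : ℕ) + j, by omega⟩
    have hcond : ¬ ((i : ℕ) + j < (i : ℕ)) := by omega
    simpa [Φ, hcond, Nat.add_sub_cancel_left] using h
  have hnn : ¬ NullPF T F := by
    intro hnull
    exact hFine (Subtype.ext (eq_zero_of_section_zero P 0 hFE (hnull 0)))
  have hmc : (i : ℕ) ≤ mult n T F c := le_mult (by omega) hvc
  have hmd : n - (i : ℕ) ≤ mult n T F d := le_mult (by omega) hvd
  have hSsub : (↑({c, d} : Finset ℝ) : Set ℝ) ⊆ Set.Icc (lo T) (hi T) := by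
    intro y hy
    simp only [Finset.coe_insert, Finset.coe_singleton, Set.mem_insert_iff,
      Set.mem_singleton_iff] at hy
    rcases hy with rfl | rfl
    exacts [hc, hd]
  have h2 := hP F hFE hnn {c, d} hSsub
  rw [Finset.sum_insert (by simp [ne_of_lt hcd]), Finset.sum_singleton] at h2
  have hmatc : mult n T F c = i := by omega
  have hmatd : mult n T F d = n - i := by omega
  -- nonvanishing on (c,d)
  have hne : ∀ k, ∀ x ∈ Ik T k, c < x → x < d → F k x ≠ 0 := by
    intro k x hx hcx hxd h0
    have hzero : F (sec T x) x = 0 := by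
      rcases lt_or_eq_of_le hx.2 with hlt | heq
      · rw [sec_eq ⟨hx.1, hlt⟩]; exact h0
      · have hklast : k ≠ Fin.last q := by
          intro hk
          rw [hk] at heq
          have hxhi : x = hi T := by rw [heq]; simp [hi, Fin.succ_last]
          rw [hxhi] at hxd
          exact absurd hxd (not_lt.mpr hd.2)
        have hkq : k.val < q := by
          have h1 := k.isLt
          have h2 : k.val ≠ q := fun hh => hklast (Fin.ext hh)
          omega
        set m : Fin q := ⟨k.val, hkq⟩ with hm
        have hmc' : m.castSucc = k := by simp [hm, Fin.ext_iff]
        have hms : (m.succ.castSucc : Fin (q + 2)) = k.succ := by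
          simp [hm, Fin.ext_iff]
        have hx' : x = T.t m.succ.castSucc := by rw [hms, ← heq]
        have hsec : sec T x = m.succ := sec_eq ⟨le_of_eq hx'.symm, by
          rw [hx']; exact T.strictMono Fin.castSucc_lt_succ⟩
        rw [hsec]
        have hvk := val_knot P hFE m
        rw [← hx', hmc'] at hvk
        rw [hvk, h0]; ring
    have hm1 : 1 ≤ mult n T F x := le_mult (by omega) (by
      intro j hj
      have hj0 : j = 0 := by omega
      rw [hj0, der_zero_apply]
      exact hzero)
    have hxab : x ∈ Set.Icc (lo T) (hi T) := Ik_subset T k hx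
    have hSsub3 : (↑({c, x, d} : Finset ℝ) : Set ℝ) ⊆ Set.Icc (lo T) (hi T) := by
      intro y hy
      simp only [Finset.coe_insert, Finset.coe_singleton, Set.mem_insert_iff,
        Set.mem_singleton_iff] at hy
      rcases hy with rfl | rfl | rfl
      exacts [hc, hxab, hd]
    have h3 := hP F hFE hnn {c, x, d} hSsub3
    have hmem1 : c ∉ ({x, d} : Finset ℝ) := by
      simp only [Finset.mem_insert, Finset.mem_singleton]
      push_neg
      exact ⟨ne_of_lt hcx, ne_of_lt hcd⟩
    have hmem2 : x ∉ ({d} : Finset ℝ) := by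
      simp only [Finset.mem_singleton]
      exact ne_of_lt hxd
    rw [Finset.sum_insert hmem1, Finset.sum_insert hmem2, Finset.sum_singleton] at h3
    rw [hmatc, hmatd] at h3
    omega
  -- sign analysis
  set J : Fin (q + 1) → Set ℝ := fun k => Ik T k ∩ Set.Ioo c d with hJ
  have hJI : ∀ k, J k ⊆ Ik T k := fun k => Set.inter_subset_left
  have hstep1 : ∀ k, (∀ x ∈ J k, 0 < F k x) ∨ (∀ x ∈ J k, F k x < 0) := by
    intro k
    by_contra hcon
    push_neg at hcon
    obtain ⟨⟨x, hx, hx0⟩, ⟨y, hy, hy0⟩⟩ := hcon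
    have hxne := hne k x (hJI k hx) hx.2.1 hx.2.2
    have hyne := hne k y (hJI k hy) hy.2.1 hy.2.2
    have hxneg : F k x < 0 := lt_of_le_of_ne hx0 hxne
    have hypos : 0 < F k y := lt_of_le_of_ne hy0 (Ne.symm hyne)
    have hpc : IsPreconnected (J k) :=
      ((convex_Icc _ _).inter (convex_Ioo c d)).isPreconnected
    have hcont : ContinuousOn (F k) (J k) :=
      ((P.smooth F hFE k).continuousOn).mono (hJI k)
    have h0mem : (0 : ℝ) ∈ Set.Icc (F k x) (F k y) := ⟨hxneg.le, hypos.le⟩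
    obtain ⟨z, hz, hz0⟩ := hpc.intermediate_value hx hy hcont h0mem
    exact hne k z (hJI k hz) hz.2.1 hz.2.2 hz0
  have hstep2 : ∀ m : Fin q, (J m.castSucc).Nonempty → (J m.succ).Nonempty →
      ((∀ x ∈ J m.castSucc, 0 < F m.castSucc x) ↔ (∀ x ∈ J m.succ, 0 < F m.succ x)) := by
    rintro m ⟨x, hx⟩ ⟨y, hy⟩
    set z := T.t m.succ.castSucc with hzdef
    have hzl : z ∈ Ik T m.castSucc := by
      rw [hzdef, ← Fin.succ_castSucc]
      exact right_mem_Ik T m.castSucc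
    have hzr : z ∈ Ik T m.succ := left_mem_Ik T m.succ
    have hcz : c < z := by
      have hxle : x ≤ T.t m.castSucc.succ := hx.1.2
      rw [Fin.succ_castSucc] at hxle
      exact lt_of_lt_of_le hx.2.1 hxle
    have hzd : z < d := lt_of_le_of_lt hy.1.1 hy.2.2
    have hzJl : z ∈ J m.castSucc := ⟨hzl, hcz, hzd⟩
    have hzJr : z ∈ J m.succ := ⟨hzr, hcz, hzd⟩
    have hvk := val_knot P hFE m
    have hM : 0 < P.M m 0 0 := (P.goodM m).2 0
    constructor
    · intro hall
      rcases hstep1 m.succ with h | h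
      · exact h
      · exfalso
        have h1 : 0 < F m.castSucc z := hall z hzJl
        have h2 : 0 < F m.succ z := by rw [hvk]; exact mul_pos hM h1
        exact absurd h2 (not_lt.mpr (h z hzJr).le)
    · intro hall
      rcases hstep1 m.castSucc with h | h
      · exact h
      · exfalso
        have h1 : 0 < F m.succ z := hall z hzJr
        have h2 : F m.succ z < 0 := by
          rw [hvk]
          exact mul_neg_of_pos_of_neg hM (h z hzJl)
        exact absurd h1 (not_lt.mpr h2.le)
  have hstep3 : ∀ dist : ℕ, ∀ k : Fin (q + 1), (J k).Nonempty →
      ∀ h : k.val + dist ≤ q, (J ⟨k.val + dist, by omega⟩).Nonempty →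
      ((∀ x ∈ J k, 0 < F k x) ↔
        (∀ x ∈ J ⟨k.val + dist, by omega⟩, 0 < F ⟨k.val + dist, by omega⟩ x)) := by
    intro dist
    induction dist with
    | zero =>
      intro k hk h hk'
      have he : (⟨k.val + 0, by omega⟩ : Fin (q + 1)) = k := by simp [Fin.ext_iff]
      rw [he]
    | succ dd ih =>
      intro k hk h hk'
      have hmidle : k.val + dd ≤ q := by omega
      set mid : Fin (q + 1) := ⟨k.val + dd, by omega⟩ with hmiddef
      set k' : Fin (q + 1) := ⟨k.val + (dd + 1), by omega⟩ with hk'def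
      have hmidne : (J mid).Nonempty := by
        rcases Nat.eq_zero_or_pos dd with h0 | hpos
        · have : mid = k := by simp [hmiddef, Fin.ext_iff, h0]
          rw [this]; exact hk
        · obtain ⟨x, hx⟩ := hk
          obtain ⟨y, hy⟩ := hk'
          refine ⟨T.t mid.castSucc, left_mem_Ik T mid, ?_, ?_⟩
          · have h1 : x ≤ T.t k.succ := hx.1.2
            have h2 : T.t k.succ ≤ T.t mid.castSucc := T.strictMono.monotone (by
              simp only [Fin.le_def, Fin.val_succ, Fin.coe_castSucc, hmiddef]
              omega)
            exact lt_of_lt_of_le hx.2.1 (h1.trans h2)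
          · have h1 : T.t mid.castSucc ≤ T.t k'.castSucc := T.strictMono.monotone (by
              simp only [Fin.le_def, Fin.coe_castSucc, hmiddef, hk'def]
              omega)
            exact lt_of_le_of_lt (h1.trans hy.1.1) hy.2.2
      have hq' : k.val + dd < q := by omega
      set m : Fin q := ⟨k.val + dd, hq'⟩ with hmdef
      have e1 : m.castSucc = mid := by simp [hmdef, hmiddef, Fin.ext_iff]
      have e2 : m.succ = k' := by simp [hmdef, hk'def, Fin.ext_iff]; omega
      have hiff1 := ih k hk hmidle hmidne
      have hiff2 := hstep2 m (by rw [e1]; exact hmidne) (by rw [e2]; exact hk')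
      rw [e1, e2] at hiff2
      exact hiff1.trans hiff2
  -- reference point
  have hz₀mem : ((c + d) / 2) ∈ Set.Icc (lo T) (hi T) :=
    ⟨by linarith [hc.1], by linarith [hd.2]⟩
  set z₀ : ℝ := (c + d) / 2 with hz₀def
  have hz₀ : z₀ ∈ Set.Ioo c d := ⟨by linarith, by linarith⟩
  set k₀ := sec T z₀ with hk₀def
  have hk₀I : z₀ ∈ Ik T k₀ := sec_mem hz₀mem.1 hz₀mem.2
  have hk₀ne : (J k₀).Nonempty := ⟨z₀, hk₀I, hz₀⟩
  have hcomp : ∀ k : Fin (q + 1), (J k).Nonempty →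
      ((∀ x ∈ J k, 0 < F k x) ↔ (∀ x ∈ J k₀, 0 < F k₀ x)) := by
    intro k hk
    rcases le_total k.val k₀.val with hle | hle
    · have e : (⟨k.val + (k₀.val - k.val), by omega⟩ : Fin (q + 1)) = k₀ := by
        simp [Fin.ext_iff]; omega
      have h3 := hstep3 (k₀.val - k.val) k hk (by have := k₀.isLt; omega)
        (by rw [e]; exact hk₀ne)
      rwa [e] at h3
    · have e : (⟨k₀.val + (k.val - k₀.val), by omega⟩ : Fin (q + 1)) = k := by
        simp [Fin.ext_iff]; omega
      have h3 := hstep3 (k.val - k₀.val) k₀ hk₀ne (by have := k.isLt; omega)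
        (by rw [e]; exact hk)
      rw [e] at h3
      exact h3.symm
  by_cases hsgn : ∀ x ∈ J k₀, 0 < F k₀ x
  · refine ⟨F, hFE, hmatc, hmatd, ?_⟩
    intro k x hx hcx hxd
    have hkne : (J k).Nonempty := ⟨x, hx, hcx, hxd⟩
    exact ((hcomp k hkne).mpr hsgn) x ⟨hx, hcx, hxd⟩
  · refine ⟨(-1 : ℝ) • F, Submodule.smul_mem _ _ hFE, ?_, ?_, ?_⟩
    · rw [mult_smul P hFE (by norm_num) hcI]; exact hmatc
    · rw [mult_smul P hFE (by norm_num) hdI]; exact hmatd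
    · intro k x hx hcx hxd
      have hkne : (J k).Nonempty := ⟨x, hx, hcx, hxd⟩
      rcases hstep1 k with hp | hn
      · exact absurd ((hcomp k hkne).mp hp) hsgn
      · have hneg := hn x ⟨hx, hcx, hxd⟩
        have : ((-1 : ℝ) • F) k x = -1 * F k x := rfl
        rw [this]
        linarith

end Aux5
/-- Theorem: an `(n+1)`-dimensional ECP-space possesses a positive Bernstein-like basis
relative to any `(c,d)` with `c < d` in `[a,b]`. -/
theorem stmt10 {q n : ℕ} (T : Knots q) (P : PWSpace n q T) (hP : IsECP P) :
    ∀ c d : ℝ, c ∈ Set.Icc (lo T) (hi T) → d ∈ Set.Icc (lo T) (hi T) → c < d →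
      ∃ B : Fin (n + 1) → PF q, IsBLB P c d B ∧ PosOn T c d B := by
  intro c d hc hd hcd
  choose B hBE hBc hBd hBpos using fun i : Fin (n + 1) => exists_Bi P hP hc hd hcd i
  refine ⟨B, ⟨hBE, ?_, fun i => ⟨hBc i, hBd i⟩⟩, fun i k x hx h1 h2 => hBpos i k x hx h1 h2⟩
  rw [Fintype.linearIndependent_iff]
  intro g hg
  have hcI : c ∈ Ik T (sec T c) := sec_mem hc.1 hc.2
  have hA0 : ∀ j : ℕ, j ≤ n → ∑ i', g i' * der T (B i') (sec T c) j c = 0 := by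
    intro j hj
    have hfun : (fun y => ∑ i', g i' * B i' (sec T c) y) = fun _ => (0 : ℝ) := by
      funext y
      have h := congrFun (congrFun hg (sec T c)) y
      simpa [Finset.sum_apply, Pi.smul_apply, smul_eq_mul] using h
    have hder := iteratedDerivWithin_sum_mul (uD T (sec T c)) hcI Finset.univ
      (fun i' => B i' (sec T c)) g (fun i' _ => P.smooth (B i') (hBE i') (sec T c)) hj
    rw [hfun, iteratedDerivWithin_zero_fun' (uD T (sec T c)) hcI] at hder
    simp only [der]
    exact hder.symm
  have hdiag : ∀ i : Fin (n + 1), der T (B i) (sec T c) i c ≠ 0 := by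
    intro i h0
    have hmem : ((i : ℕ) + 1) ≤ mult n T (B i) c := le_mult (by have := i.isLt; omega) (by
      intro j hj
      rcases Nat.lt_or_ge j i with hji | hji
      · exact (mult_mem T (B i) c).2 j (by rw [hBc i]; exact hji)
      · have hje : j = i := by omega
        rw [hje]; exact h0)
    rw [hBc i] at hmem
    omega
  have hall : ∀ N : ℕ, ∀ i : Fin (n + 1), (i : ℕ) = N → g i = 0 := by
    intro N
    induction N using Nat.strong_induction_on with
    | _ N ih =>
      intro i hiN
      have h := hA0 i (by have := i.isLt; omega)
      rw [Finset.sum_eq_single i] at h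
      · rcases mul_eq_zero.mp h with h | h
        · exact h
        · exact absurd h (hdiag i)
      · intro b _ hb
        rcases Nat.lt_or_ge (b : ℕ) (i : ℕ) with hbi | hbi
        · rw [ih b (by omega) b rfl]; ring
        · have hbi' : (i : ℕ) < (b : ℕ) := by
            rcases Nat.lt_or_ge (i : ℕ) (b : ℕ) with h' | h'
            · exact h'
            · exact absurd (Fin.ext (by omega) : b = i) hb
          have hz : der T (B b) (sec T c) i c = 0 :=
            (mult_mem T (B b) c).2 i (by rw [hBc b]; exact hbi')
          rw [hz]; ring
      · intro hni; exact absurd (Finset.mem_univ i) hni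
  intro i
  exact hall i i rfl

end PW
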